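/- arXiv:2011.11672 — 2 statements merged into one kernel-verified Lean document; each statement's English description precedes it below -/
import Mathlib

section
/- Let S be a circle of radius R centered at t, and C the circle of radius r centered at t with 0 < r ≤ R. Suppose a ∈ S, b ∈ C, and the segment ab meets C only at b (equivalently, every point of ab other than b is at distance > r from t). Then the angle at t between ta and tb is at most arccos(r/R). -/
open Real

/-- If `a` is on the circle of radius `R` around `t`, `b` on the circle of radius
`r ≤ R`, and the segment `ab` stays outside the open disk of radius `r`
(meeting the circle `C` only at `b`), then the angle at `t` between `a` and `b`
is at most `arccos (r/R)`. -/
theorem stmt_7 (t a b : EuclideanSpace ℝ (Fin 2)) (r R : ℝ)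
    (hr : 0 < r) (hrR : r ≤ R)
    (ha : dist a t = R) (hb : dist b t = r)
    (hseg : ∀ x ∈ segment ℝ a b, r ≤ dist x t) :
    EuclideanGeometry.angle a t b ≤ Real.arccos (r / R) := by
  have hR : 0 < R := lt_of_lt_of_le hr hrR
  set u := a - t with hu_def
  set v := b - t with hv_def
  have hu : ‖u‖ = R := by rw [hu_def, ← dist_eq_norm]; exact ha
  have hv : ‖v‖ = r := by rw [hv_def, ← dist_eq_norm]; exact hb
  -- the key: ⟪v, u - v⟫ ≥ 0
  set c : ℝ := inner ℝ v (u - v) with hc_def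
  set M : ℝ := ‖u - v‖ ^ 2 with hM_def
  -- for each s ∈ [0,1], the point s•a + (1-s)•b lies on the segment
  have hpoint : ∀ s : ℝ, 0 ≤ s → s ≤ 1 →
      r ^ 2 ≤ r ^ 2 + 2 * (s * c) + s ^ 2 * M := by
    intro s hs0 hs1
    have hx : s • a + (1 - s) • b ∈ segment ℝ a b :=
      ⟨s, 1 - s, hs0, by linarith, by ring, rfl⟩
    have hd := hseg _ hx
    have hxt : (s • a + (1 - s) • b) - t = v + s • (u - v) := by
      rw [hu_def, hv_def]
      module
    have hnorm : r ≤ ‖v + s • (u - v)‖ := by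
      rw [← hxt, ← dist_eq_norm]; exact hd
    have hsq : r ^ 2 ≤ ‖v + s • (u - v)‖ ^ 2 := by
      nlinarith [norm_nonneg (v + s • (u - v))]
    have hexp : ‖v + s • (u - v)‖ ^ 2 = r ^ 2 + 2 * (s * c) + s ^ 2 * M := by
      rw [norm_add_sq_real, real_inner_smul_right, norm_smul, hv]
      simp only [hc_def, hM_def, mul_pow, Real.norm_eq_abs, sq_abs]
    linarith [hexp ▸ hsq]
  have hc : 0 ≤ c := by
    by_contra hcneg
    push_neg at hcneg
    have hM0 : 0 ≤ M := sq_nonneg _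
    rcases eq_or_lt_of_le hM0 with hM | hM
    · -- M = 0 means u = v, so c = 0
      have : u - v = 0 := by
        have := hM.symm
        rw [hM_def] at this
        simpa [pow_eq_zero_iff] using this
      rw [hc_def, this, inner_zero_right] at hcneg
      exact absurd hcneg (lt_irrefl 0)
    · set s := min 1 (-c / M) with hs_def
      have hs0 : 0 < s := lt_min one_pos (div_pos (by linarith) hM)
      have hs1 : s ≤ 1 := min_le_left _ _
      have hsM : s * M ≤ -c := by
        have : s ≤ -c / M := min_le_right _ _
        calc s * M ≤ (-c / M) * M := by nlinarith
          _ = -c := by field_simp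
      have := hpoint s hs0.le hs1
      nlinarith
  -- now ⟪u, v⟫ ≥ r²
  clear_value c M
  clear hM_def hpoint
  clear_value u v
  have hinner : r ^ 2 ≤ (inner ℝ u v : ℝ) := by
    have h1 : (inner ℝ u v : ℝ) = inner ℝ v (u - v) + ‖v‖ ^ 2 := by
      rw [inner_sub_right, ← real_inner_self_eq_norm_sq, real_inner_comm]
      ring
    rw [h1, ← hc_def, hv]
    linarith
  have hratio : r / R ≤ (inner ℝ u v : ℝ) / (‖u‖ * ‖v‖) := by
    rw [hu, hv, div_le_div_iff₀ hR (by positivity)]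
    nlinarith
  rw [EuclideanGeometry.angle, InnerProductGeometry.angle, vsub_eq_sub, vsub_eq_sub,
    ← hu_def, ← hv_def, Real.arccos, Real.arccos]
  have := Real.monotone_arcsin hratio
  linarith
end

section
/- Let t be the origin and let b, b' be two points with t, b', b collinear and b' strictly between t and b (so |b' − t| < |b − t|). Let σ be the closed circular sector with center b, radii segment bt and a segment bc with ∠tbc = ρ ∈ (0, π/2], and let σ' be the closed circular sector with center b', radius |b' − t|, bounded by b't and the rotation of b't about b' by the same angle ρ in the same rotational direction. Then σ' ⊆ σ. -/
open Real

/-- Sector nesting: if `b'` lies strictly between `t` and `b` on segment `tb`,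
then the closed circular sector centered at `b'` with radius `|b' − t|`,
starting at the ray toward `t` and sweeping angle `ρ ∈ (0, π/2]`, is contained
in the corresponding sector centered at `b`. -/
theorem stmt_17 (t b b' : ℂ) (ρ : ℝ) (hρ₀ : 0 < ρ) (hρ₁ : ρ ≤ π / 2)
    (hb' : b' ∈ segment ℝ t b) (hne : ‖b' - t‖ < ‖b - t‖) :
    {x : ℂ | ∃ l φ : ℝ, 0 ≤ l ∧ l ≤ 1 ∧ 0 ≤ φ ∧ φ ≤ ρ ∧
      x = b' + (l : ℂ) * Complex.exp ((φ : ℂ) * Complex.I) * (t - b')} ⊆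
    {x : ℂ | ∃ l φ : ℝ, 0 ≤ l ∧ l ≤ 1 ∧ 0 ≤ φ ∧ φ ≤ ρ ∧
      x = b + (l : ℂ) * Complex.exp ((φ : ℂ) * Complex.I) * (t - b)} := by
  rw [segment_eq_image'] at hb'
  obtain ⟨u, ⟨hu0, hu1⟩, rfl⟩ := hb'
  simp only [add_sub_cancel_left, Complex.real_smul, norm_mul, Complex.norm_real,
    Real.norm_eq_abs, abs_of_nonneg hu0] at hne
  have hbt : 0 < ‖b - t‖ := lt_of_le_of_lt (by positivity) hne
  have hu1' : u < 1 := by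
    by_contra h
    push_neg at h
    nlinarith
  rintro x ⟨l, φ, hl0, hl1, hφ0, hφρ, hx⟩
  set z : ℂ := ((1 - u : ℝ) : ℂ) + ((l * u : ℝ) : ℂ) * Complex.exp ((φ : ℂ) * Complex.I)
    with hz
  have hre : z.re = (1 - u) + l * u * Real.cos φ := by
    simp [hz, Complex.exp_ofReal_mul_I_re, Complex.exp_ofReal_mul_I_im, Complex.mul_re]
  have him : z.im = l * u * Real.sin φ := by
    simp [hz, Complex.exp_ofReal_mul_I_re, Complex.exp_ofReal_mul_I_im, Complex.mul_im]
  have hcos : 0 ≤ Real.cos φ :=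
    Real.cos_nonneg_of_mem_Icc ⟨by linarith [Real.pi_pos], by linarith⟩
  have hsin : 0 ≤ Real.sin φ :=
    Real.sin_nonneg_of_nonneg_of_le_pi hφ0 (by linarith [Real.pi_pos])
  have hrepos : 0 < z.re := by
    have : 0 ≤ l * u * Real.cos φ := by positivity
    rw [hre]; linarith
  have himnn : 0 ≤ z.im := by rw [him]; positivity
  have habs : ‖z‖ ≤ 1 := by
    have h1 : ‖(((1 - u : ℝ)) : ℂ)‖ = 1 - u := by
      rw [Complex.norm_real, Real.norm_eq_abs, abs_of_nonneg (by linarith)]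
    have h2 : ‖((l * u : ℝ) : ℂ) * Complex.exp ((φ : ℂ) * Complex.I)‖ = l * u := by
      rw [norm_mul, Complex.norm_exp_ofReal_mul_I, Complex.norm_real, Real.norm_eq_abs,
        abs_of_nonneg (by positivity), mul_one]
    have h3 := norm_add_le (((1 - u : ℝ)) : ℂ)
      (((l * u : ℝ) : ℂ) * Complex.exp ((φ : ℂ) * Complex.I))
    rw [h1, h2] at h3
    refine le_trans h3 ?_
    nlinarith
  have harg0 : 0 ≤ Complex.arg z := Complex.arg_nonneg_iff.2 himnn
  have harg2 : Complex.arg z < π / 2 := Complex.arg_lt_pi_div_two_iff.2 (Or.inl hrepos)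
  have hargφ : Complex.arg z ≤ φ := by
    rcases lt_or_ge φ (π / 2) with hφ2 | hφ2
    · have hcos' : 0 < Real.cos φ :=
        Real.cos_pos_of_mem_Ioo ⟨by linarith [Real.pi_pos], hφ2⟩
      have htan : Real.tan (Complex.arg z) ≤ Real.tan φ := by
        rw [Complex.tan_arg, Real.tan_eq_sin_div_cos, div_le_div_iff₀ hrepos hcos', hre, him]
        nlinarith
      by_contra h
      push_neg at h
      have := Real.strictMonoOn_tan ⟨by linarith [Real.pi_pos], hφ2⟩
        ⟨by linarith [Real.pi_pos], harg2⟩ h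
      linarith
    · linarith
  refine ⟨‖z‖, Complex.arg z, norm_nonneg _, habs, harg0,
    hargφ.trans hφρ, ?_⟩
  have hzeq : ((‖z‖ : ℝ) : ℂ) * Complex.exp ((Complex.arg z : ℂ) * Complex.I) = z :=
    Complex.norm_mul_exp_arg_mul_I z
  rw [hx, hzeq, hz]
  simp only [Complex.real_smul]
  push_cast
  ring
end
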